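/- For a Hermitian matrix U ∈ ℂ^{n×n} and ρ ∈ (0,1], if trace(U) − √(2 ln(1/ρ)) x + ln(ρ) y + u ≥ 0, √(‖U‖_F² + 2‖u_vec‖²) ≤ x, yI + U ⪰ 0, and y ≥ 0, then trace(U) − √(2 ln(1/ρ)) √(‖U‖_F² + 2‖u_vec‖²) + ln(ρ) λ⁺_max(−U) + u ≥ 0, where λ⁺_max(−U) = max(λ_max(−U), 0). -/

import Mathlib

open Matrix ComplexOrder

theorem bernstein_restriction_implies_condition
    {n : Type*} [Fintype n] [DecidableEq n] [Nonempty n]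
    (U : Matrix n n ℂ) (hU : U.IsHermitian)
    (uvec : n → ℂ) (u ρ x y : ℝ) (hρ : ρ ∈ Set.Ioc (0 : ℝ) 1)
    (h1 : (Matrix.trace U).re - Real.sqrt (2 * Real.log (1 / ρ)) * x
            + Real.log ρ * y + u ≥ 0)
    (h2 : Real.sqrt ((∑ i, ∑ j, ‖U i j‖ ^ 2) + 2 * ∑ i, ‖uvec i‖ ^ 2) ≤ x)
    (h3 : (y • (1 : Matrix n n ℂ) + U).PosSemidef)
    (h4 : 0 ≤ y) :
    (Matrix.trace U).re
        - Real.sqrt (2 * Real.log (1 / ρ)) *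
            Real.sqrt ((∑ i, ∑ j, ‖U i j‖ ^ 2) + 2 * ∑ i, ‖uvec i‖ ^ 2)
        + Real.log ρ * max (⨆ i, hU.neg.eigenvalues i) 0 + u ≥ 0 := by
  have hc : 0 ≤ Real.sqrt (2 * Real.log (1 / ρ)) := Real.sqrt_nonneg _
  have hs : 0 ≤ Real.sqrt ((∑ i, ∑ j, ‖U i j‖ ^ 2) + 2 * ∑ i, ‖uvec i‖ ^ 2) :=
    Real.sqrt_nonneg _
  have hlog : Real.log ρ ≤ 0 := Real.log_nonpos hρ.1.le hρ.2
  -- each eigenvalue of -U is ≤ y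
  have hev : ∀ i, hU.neg.eigenvalues i ≤ y := by
    intro i
    set v : n → ℂ := ⇑(hU.neg.eigenvectorBasis i) with hv
    have hmv : (-U) *ᵥ v = (hU.neg.eigenvalues i) • v := hU.neg.mulVec_eigenvectorBasis i
    have hvv : dotProduct (star v) v = 1 := by
      have hnorm := hU.neg.eigenvectorBasis.orthonormal.1 i
      have h' : (inner ℂ (hU.neg.eigenvectorBasis i) (hU.neg.eigenvectorBasis i) : ℂ) = 1 := by
        rw [inner_self_eq_norm_sq_to_K, hnorm]
        norm_num
      rw [EuclideanSpace.inner_eq_star_dotProduct] at h'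
      rw [dotProduct_comm] at h'
      simpa using h'
    have hpos := h3.dotProduct_mulVec_nonneg v
    have hmul : (y • (1 : Matrix n n ℂ) + U) *ᵥ v
        = ((y : ℂ) - (hU.neg.eigenvalues i : ℝ)) • v := by
      have hU' : U *ᵥ v = (-(hU.neg.eigenvalues i : ℝ) : ℂ) • v := by
        have : -(U *ᵥ v) = (hU.neg.eigenvalues i) • v := by
          simpa [Matrix.neg_mulVec] using hmv
        have := congrArg Neg.neg this
        simp only [neg_neg] at this
        rw [this]
        funext j
        simp [Pi.smul_apply, smul_eq_mul]
      rw [Matrix.add_mulVec, Matrix.smul_mulVec, Matrix.one_mulVec, hU']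
      funext j
      simp [Pi.smul_apply, smul_eq_mul]
      ring
    rw [hmul] at hpos
    have : (0 : ℂ) ≤ ((y : ℂ) - (hU.neg.eigenvalues i : ℝ)) := by
      have hd : dotProduct (star v) (((y : ℂ) - (hU.neg.eigenvalues i : ℝ)) • v)
          = ((y : ℂ) - (hU.neg.eigenvalues i : ℝ)) * dotProduct (star v) v := by
        simp [dotProduct_smul]
      rw [hd, hvv, mul_one] at hpos
      exact hpos
    have h0 : (0 : ℝ) ≤ y - hU.neg.eigenvalues i := by
      have h' : ((0 : ℝ) : ℂ) ≤ ((y - hU.neg.eigenvalues i : ℝ) : ℂ) := by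
        push_cast
        simpa using this
      exact_mod_cast h'
    linarith
  have hsup : max (⨆ i, hU.neg.eigenvalues i) 0 ≤ y :=
    max_le (ciSup_le hev) h4
  have key1 : Real.sqrt (2 * Real.log (1 / ρ)) *
      Real.sqrt ((∑ i, ∑ j, ‖U i j‖ ^ 2) + 2 * ∑ i, ‖uvec i‖ ^ 2)
      ≤ Real.sqrt (2 * Real.log (1 / ρ)) * x :=
    mul_le_mul_of_nonneg_left h2 hc
  have key2 : Real.log ρ * y ≤ Real.log ρ * max (⨆ i, hU.neg.eigenvalues i) 0 :=
    mul_le_mul_of_nonpos_left hsup hlog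
  linarith
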